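/- Let T : [0,1] → [0,1] be a piecewise linear map with a finite partition 0 = a_0 < a_1 < ⋯ < a_K = 1 such that on each interval [a_{i-1}, a_i] the map T is affine with |slope| ≥ λ > 1 and maps [a_{i-1}, a_i] onto a union of partition intervals (strong Markov property). If moreover for every i there exists n with T^n([a_{i-1},a_i]) = [0,1], then T admits an invariant probability measure absolutely continuous with respect to Lebesgue measure. -/

import Mathlib

open MeasureTheory Filter Topology

section Aux

lemma restrict_finset_biUnion_disjoint {α ι : Type*} [MeasurableSpace α] (μ : Measure α)
    (t : Finset ι) (s : ι → Set α) (hmeas : ∀ i, MeasurableSet (s i))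
    (hdisj : ∀ i ∈ t, ∀ j ∈ t, i ≠ j → Disjoint (s i) (s j)) :
    μ.restrict (⋃ i ∈ t, s i) = ∑ i ∈ t, μ.restrict (s i) := by
  classical
  induction t using Finset.induction_on with
  | empty => simp
  | @insert a t ha ih =>
    have hd : Disjoint (s a) (⋃ x ∈ t, s x) := by
      rw [Set.disjoint_iUnion₂_right]
      intro i hi
      exact hdisj a (Finset.mem_insert_self a t) i (Finset.mem_insert_of_mem hi)
        (fun h => ha (h ▸ hi))
    have hmt : MeasurableSet (⋃ x ∈ t, s x) :=
      t.measurableSet_biUnion fun i _ => hmeas i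
    rw [Finset.set_biUnion_insert, Finset.sum_insert ha,
      Measure.restrict_union hd hmt,
      ih (fun i hi j hj hij => hdisj i (Finset.mem_insert_of_mem hi) j
        (Finset.mem_insert_of_mem hj) hij)]

lemma measure_map_finset_sum {α β ι : Type*} [MeasurableSpace α] [MeasurableSpace β] {f : α → β}
    (hf : Measurable f) (t : Finset ι) (μ : ι → Measure α) :
    Measure.map f (∑ i ∈ t, μ i) = ∑ i ∈ t, Measure.map f (μ i) := by
  classical
  induction t using Finset.induction_on with
  | empty => simp
  | @insert a t ha ih =>
    rw [Finset.sum_insert ha, Measure.map_add _ _ hf, ih, Finset.sum_insert ha]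

lemma map_affine_volume {s t : ℝ} (hs : s ≠ 0) :
    Measure.map (fun x => s * x + t) volume = ENNReal.ofReal |s|⁻¹ • volume := by
  have h1 : (fun x : ℝ => s * x + t) = (fun y : ℝ => y + t) ∘ (fun x : ℝ => s * x) := rfl
  rw [h1, ← Measure.map_map (measurable_add_const t) (measurable_const_mul s)]
  have h2 : Measure.map (fun x : ℝ => s * x) volume = ENNReal.ofReal |s⁻¹| • volume :=
    Real.map_volume_mul_left hs
  rw [h2, Measure.map_smul, map_add_right_eq_self volume t, abs_inv]

end Aux

lemma exists_cesaro_fixed {K : ℕ} (m : Fin K → Fin K → ℝ) (w : Fin K → ℝ)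
    (hm : ∀ j k, 0 ≤ m j k) (hw : ∀ j, 0 < w j)
    (hmass : ∀ k, ∑ j, w j * m j k = w k) :
    ∃ c : Fin K → ℝ, (∀ j, 0 ≤ c j) ∧ (∑ j, w j * c j = ∑ j, w j) ∧
      ∀ j, (∑ k, m j k * c k) = c j := by
  classical
  set W : ℝ := ∑ j, w j with hWdef
  have hW0 : 0 ≤ W := Finset.sum_nonneg fun j _ => (hw j).le
  set f : (Fin K → ℝ) →ₗ[ℝ] (Fin K → ℝ) := Matrix.mulVecLin (Matrix.of m) with hfdef
  have hfapp : ∀ c j, f c j = ∑ k, m j k * c k := by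
    intro c j
    simp [hfdef, Matrix.mulVecLin_apply, Matrix.mulVec, dotProduct]
  set S : Set (Fin K → ℝ) := {c | (∀ j, 0 ≤ c j) ∧ ∑ j, w j * c j = W} with hSdef
  have hPS : ∀ c ∈ S, f c ∈ S := by
    rintro c ⟨hc0, hc1⟩
    constructor
    · intro j
      rw [hfapp]
      exact Finset.sum_nonneg fun k _ => mul_nonneg (hm j k) (hc0 k)
    · have e : ∑ j, w j * f c j = ∑ k, (∑ j, w j * m j k) * c k := by
        simp only [hfapp, Finset.mul_sum, Finset.sum_mul]
        rw [Finset.sum_comm]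
        exact Finset.sum_congr rfl fun k _ => Finset.sum_congr rfl fun j _ => by ring
      rw [e]
      simp only [hmass]
      exact hc1
  set B : ℝ := ∑ j, W / w j with hBdef
  have hB0 : 0 ≤ B := Finset.sum_nonneg fun j _ => div_nonneg hW0 (hw j).le
  have hSB : ∀ c ∈ S, ‖c‖ ≤ B := by
    rintro c ⟨hc0, hc1⟩
    rw [pi_norm_le_iff_of_nonneg hB0]
    intro j
    rw [Real.norm_eq_abs, abs_of_nonneg (hc0 j)]
    have h1 : w j * c j ≤ W := by
      rw [← hc1]
      exact Finset.single_le_sum (fun k _ => mul_nonneg (hw k).le (hc0 k)) (Finset.mem_univ j)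
    have h2 : c j ≤ W / w j := (le_div_iff₀ (hw j)).2 (by linarith [mul_comm (w j) (c j)])
    exact h2.trans (Finset.single_le_sum
      (fun k (_ : k ∈ Finset.univ) => div_nonneg hW0 (hw k).le) (Finset.mem_univ j))
  have hSclosed : IsClosed S := by
    have h1 : IsClosed {c : Fin K → ℝ | ∀ j, 0 ≤ c j} := by
      have e : {c : Fin K → ℝ | ∀ j, 0 ≤ c j} = ⋂ j, {c | 0 ≤ c j} := by ext c; simp
      rw [e]
      exact isClosed_iInter fun j => isClosed_le continuous_const (continuous_apply j)
    have h2 : IsClosed {c : Fin K → ℝ | ∑ j, w j * c j = W} :=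
      isClosed_eq (continuous_finset_sum _ fun j _ => continuous_const.mul (continuous_apply j))
        continuous_const
    rw [hSdef, Set.setOf_and]
    exact h1.inter h2
  have hScompact : IsCompact S := by
    refine (isCompact_closedBall (0 : Fin K → ℝ) B).of_isClosed_subset hSclosed fun c hc => ?_
    rw [Metric.mem_closedBall, dist_zero_right]
    exact hSB c hc
  set c0 : Fin K → ℝ := fun _ => 1 with hc0def
  have hc0S : c0 ∈ S := ⟨fun j => zero_le_one, by simp [hc0def, hWdef]⟩
  have hiter : ∀ n, f^[n] c0 ∈ S := by
    intro n; induction n with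
    | zero => simpa using hc0S
    | succ n ih => rw [Function.iterate_succ_apply']; exact hPS _ ih
  set b : ℕ → (Fin K → ℝ) :=
    fun n => ((n : ℝ)+1)⁻¹ • ∑ i ∈ Finset.range (n+1), f^[i] c0 with hbdef
  have hbS : ∀ n, b n ∈ S := by
    intro n
    constructor
    · intro j
      have e : b n j = ((n:ℝ)+1)⁻¹ * ∑ i ∈ Finset.range (n+1), f^[i] c0 j := by
        simp [hbdef, Finset.sum_apply]
      rw [e]
      exact mul_nonneg (by positivity) (Finset.sum_nonneg fun i _ => (hiter i).1 j)
    · have e1 : ∀ j, w j * b n j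
          = ((n:ℝ)+1)⁻¹ * ∑ i ∈ Finset.range (n+1), w j * f^[i] c0 j := by
        intro j
        simp only [hbdef, Pi.smul_apply, Finset.sum_apply, smul_eq_mul]
        rw [← Finset.mul_sum]
        ring
      calc ∑ j, w j * b n j
          = ∑ j, ((n:ℝ)+1)⁻¹ * ∑ i ∈ Finset.range (n+1), w j * f^[i] c0 j :=
            Finset.sum_congr rfl fun j _ => e1 j
        _ = ((n:ℝ)+1)⁻¹ * ∑ j, ∑ i ∈ Finset.range (n+1), w j * f^[i] c0 j := by
            rw [← Finset.mul_sum]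
        _ = ((n:ℝ)+1)⁻¹ * ∑ i ∈ Finset.range (n+1), ∑ j, w j * f^[i] c0 j := by
            rw [Finset.sum_comm]
        _ = ((n:ℝ)+1)⁻¹ * ∑ i ∈ Finset.range (n+1), W := by
            congr 1
            exact Finset.sum_congr rfl fun i _ => (hiter i).2
        _ = W := by
            rw [Finset.sum_const, Finset.card_range, nsmul_eq_mul]
            push_cast
            have : ((n:ℝ)+1) ≠ 0 := by positivity
            field_simp
  have hkey : ∀ n, f (b n) - b n = ((n:ℝ)+1)⁻¹ • (f^[n+1] c0 - c0) := by
    intro n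
    have h1 : f (b n) = ((n:ℝ)+1)⁻¹ • ∑ i ∈ Finset.range (n+1), f^[i+1] c0 := by
      rw [hbdef, LinearMap.map_smul, _root_.map_sum]
      congr 1
      exact Finset.sum_congr rfl fun i _ => (Function.iterate_succ_apply' f i c0).symm
    have h4 : ∑ i ∈ Finset.range (n+1), f^[i+1] c0 + f^[0] c0
        = ∑ i ∈ Finset.range (n+1), f^[i] c0 + f^[n+1] c0 :=
      (Finset.sum_range_succ' (fun i => f^[i] c0) (n+1)).symm.trans
        (Finset.sum_range_succ (fun i => f^[i] c0) (n+1))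
    have h2 : ∑ i ∈ Finset.range (n+1), f^[i+1] c0
        = (∑ i ∈ Finset.range (n+1), f^[i] c0) + f^[n+1] c0 - c0 := by
      simpa [Function.iterate_zero_apply] using eq_sub_of_add_eq h4
    rw [h1, h2, hbdef, ← smul_sub]
    congr 1
    abel
  obtain ⟨c, hcS, φ, hφ, hconv⟩ := hScompact.tendsto_subseq hbS
  have hfc : Continuous f := f.continuous_of_finiteDimensional
  have h1 : Tendsto (fun n => f (b (φ n)) - b (φ n)) atTop (𝓝 (f c - c)) :=
    ((hfc.tendsto c).comp hconv).sub hconv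
  have h2 : Tendsto (fun n => f (b (φ n)) - b (φ n)) atTop (𝓝 0) := by
    have hbound : ∀ n, ‖f (b (φ n)) - b (φ n)‖ ≤ ((n:ℝ)+1)⁻¹ * (2*B) := by
      intro n
      rw [hkey (φ n), norm_smul]
      have hφn : (n:ℝ)+1 ≤ (φ n : ℝ)+1 := by
        have hle : n ≤ φ n := hφ.le_apply
        have : (n:ℝ) ≤ (φ n : ℝ) := by exact_mod_cast hle
        linarith
      have hnorm : ‖f^[φ n + 1] c0 - c0‖ ≤ 2*B := by
        calc ‖f^[φ n + 1] c0 - c0‖ ≤ ‖f^[φ n + 1] c0‖ + ‖c0‖ := norm_sub_le _ _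
          _ ≤ B + B := add_le_add (hSB _ (hiter _)) (hSB _ hc0S)
          _ = 2*B := by ring
      have hpos : (0:ℝ) < (φ n : ℝ)+1 := by positivity
      calc ‖((φ n : ℝ)+1)⁻¹‖ * ‖f^[φ n + 1] c0 - c0‖
          ≤ ((φ n : ℝ)+1)⁻¹ * (2*B) := by
            rw [Real.norm_eq_abs, abs_of_pos (by positivity)]
            exact mul_le_mul_of_nonneg_left hnorm (by positivity)
        _ ≤ ((n:ℝ)+1)⁻¹ * (2*B) := by
            apply mul_le_mul_of_nonneg_right _ (by positivity)
            exact inv_anti₀ (by positivity) hφn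
    have h := tendsto_one_div_add_atTop_nhds_zero_nat (𝕜 := ℝ)
    have h' : Tendsto (fun n : ℕ => ((n:ℝ)+1)⁻¹) atTop (𝓝 0) := by
      simpa [one_div] using h
    have htend : Tendsto (fun n : ℕ => ((n:ℝ)+1)⁻¹ * (2*B)) atTop (𝓝 0) := by
      simpa using h'.mul_const (2*B)
    exact squeeze_zero_norm hbound htend
  have hfix : f c = c := sub_eq_zero.1 (tendsto_nhds_unique h1 h2)
  exact ⟨c, hcS.1, hcS.2, fun j => by rw [← hfapp]; exact congrFun hfix j⟩

/-- A piecewise affine, uniformly expanding interval map with a finite strong Markov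
partition, some iterate of each element of which covers `[0,1]`, admits an invariant
probability measure absolutely continuous with respect to Lebesgue measure. -/
theorem piecewise_linear_markov_expanding_acim (K : ℕ) (hK : 0 < K)
    (a : Fin (K + 1) → ℝ) (ha0 : a 0 = 0) (ha1 : a (Fin.last K) = 1)
    (hmono : StrictMono a)
    (T : ℝ → ℝ) (hTmeas : Measurable T)
    (hmaps : Set.MapsTo T (Set.Icc 0 1) (Set.Icc 0 1))
    (lam : ℝ) (hlam : 1 < lam)
    (slope intercept : Fin K → ℝ)
    (haff : ∀ i : Fin K, ∀ x ∈ Set.Icc (a i.castSucc) (a i.succ),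
      T x = slope i * x + intercept i)
    (hexp : ∀ i, lam ≤ |slope i|)
    (hmarkov : ∀ i : Fin K, ∃ S : Set (Fin K),
      T '' Set.Icc (a i.castSucc) (a i.succ) = ⋃ j ∈ S, Set.Icc (a j.castSucc) (a j.succ))
    (htrans : ∀ i : Fin K, ∃ n : ℕ, T^[n] '' Set.Icc (a i.castSucc) (a i.succ) = Set.Icc 0 1) :
    ∃ μ : Measure ℝ, IsProbabilityMeasure μ ∧ μ ≪ volume ∧ Measure.map T μ = μ := by
  classical
  have hs0 : ∀ k, slope k ≠ 0 := fun k h => by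
    have h2 := hexp k; rw [h, abs_zero] at h2; linarith
  set w : Fin K → ℝ := fun j => a j.succ - a j.castSucc with hwdef
  have hw : ∀ j, 0 < w j := fun j => sub_pos.2 (hmono (Fin.castSucc_lt_succ (i := j)))
  set I : Fin K → Set ℝ := fun j => Set.Ioo (a j.castSucc) (a j.succ) with hIdef
  have hImeas : ∀ j, MeasurableSet (I j) := fun j => measurableSet_Ioo
  have hIvol : ∀ j, volume (I j) = ENNReal.ofReal (w j) := fun j => Real.volume_Ioo
  have hIdisj : ∀ i j : Fin K, i ≠ j → Disjoint (I i) (I j) := by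
    intro i j hij
    wlog h : i < j generalizing i j
    · exact (this j i hij.symm ((hij.lt_or_gt).resolve_left h)).symm
    have hle : a i.succ ≤ a j.castSucc := hmono.monotone (Fin.succ_le_castSucc_iff.2 h)
    rw [Set.disjoint_left]
    intro x hxi hxj
    exact absurd (hxi.2.trans_le hle) (not_lt.2 hxj.1.le)
  choose S hS using hmarkov
  set F : Fin K → Finset (Fin K) := fun k => (Set.toFinite (S k)).toFinset with hFdef
  set A : Fin K → ℝ → ℝ := fun k x => slope k * x + intercept k with hAdef
  have hA_emb : ∀ k, MeasurableEmbedding (A k) := fun k =>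
    (affineHomeomorph (slope k) (intercept k) (hs0 k)).measurableEmbedding
  have hAinj : ∀ k, Function.Injective (A k) := fun k => (hA_emb k).injective
  have hmapA : ∀ k, Measure.map (A k) volume = ENNReal.ofReal |slope k|⁻¹ • volume :=
    fun k => map_affine_volume (hs0 k)
  have hTIcc : ∀ k, A k '' Set.Icc (a k.castSucc) (a k.succ)
      = ⋃ j ∈ F k, Set.Icc (a j.castSucc) (a j.succ) := by
    intro k
    rw [← Set.image_congr (haff k), hS k]
    ext x
    simp [hFdef, Set.Finite.mem_toFinset]
  have hbranch : ∀ k, Measure.map T (volume.restrict (I k))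
      = ENNReal.ofReal |slope k|⁻¹ • volume.restrict (A k '' I k) := by
    intro k
    have hTA : Measure.map T (volume.restrict (I k))
        = Measure.map (A k) (volume.restrict (I k)) := by
      apply Measure.map_congr
      filter_upwards [ae_restrict_mem (hImeas k)] with x hx
      exact haff k x (Set.Ioo_subset_Icc_self hx)
    have hr := (hA_emb k).restrict_map volume (A k '' I k)
    rw [Set.preimage_image_eq _ (hAinj k)] at hr
    rw [hTA, ← hr, hmapA k, Measure.restrict_smul]
  have hUvol : ∀ k, volume (A k '' I k) = ENNReal.ofReal (|slope k| * w k) := by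
    intro k
    have habs : (0:ℝ) < |slope k| := abs_pos.2 (hs0 k)
    have hmi : MeasurableSet (A k '' I k) := (hA_emb k).measurableSet_image' (hImeas k)
    have h1 : (Measure.map (A k) volume) (A k '' I k) = ENNReal.ofReal (w k) := by
      rw [Measure.map_apply (hA_emb k).measurable hmi, Set.preimage_image_eq _ (hAinj k),
        hIvol k]
    rw [hmapA k, Measure.smul_apply, smul_eq_mul] at h1
    calc volume (A k '' I k)
        = ENNReal.ofReal |slope k| * (ENNReal.ofReal |slope k|⁻¹ * volume (A k '' I k)) := by
          rw [← mul_assoc, ← ENNReal.ofReal_mul habs.le, mul_inv_cancel₀ habs.ne',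
            ENNReal.ofReal_one, one_mul]
      _ = ENNReal.ofReal |slope k| * ENNReal.ofReal (w k) := by rw [h1]
      _ = ENNReal.ofReal (|slope k| * w k) := (ENNReal.ofReal_mul habs.le).symm
  have hae : ∀ k, (A k '' I k) =ᵐ[volume] ⋃ j ∈ F k, I j := by
    intro k
    have hpq : a k.castSucc ≤ a k.succ := (hmono (Fin.castSucc_lt_succ (i := k))).le
    have hsub1 : A k '' I k ⊆ ⋃ j ∈ F k, Set.Icc (a j.castSucc) (a j.succ) := by
      rw [← hTIcc k]; exact Set.image_mono Set.Ioo_subset_Icc_self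
    have hsub2 : (⋃ j ∈ F k, I j) ⊆ ⋃ j ∈ F k, Set.Icc (a j.castSucc) (a j.succ) :=
      Set.iUnion₂_mono fun j _ => Set.Ioo_subset_Icc_self
    have hnull1 : volume ((⋃ j ∈ F k, Set.Icc (a j.castSucc) (a j.succ)) \ (A k '' I k)) = 0 := by
      rw [← hTIcc k, ← Set.image_diff (hAinj k)]
      have e : Set.Icc (a k.castSucc) (a k.succ) \ I k = {a k.castSucc, a k.succ} :=
        Set.Icc_diff_Ioo_same hpq
      rw [e]
      exact (((Set.finite_singleton _).insert _).image _).measure_zero volume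
    have hnull2 : volume ((⋃ j ∈ F k, Set.Icc (a j.castSucc) (a j.succ)) \ ⋃ j ∈ F k, I j)
        = 0 := by
      have hsub : (⋃ j ∈ F k, Set.Icc (a j.castSucc) (a j.succ)) \ (⋃ j ∈ F k, I j)
          ⊆ ⋃ j ∈ F k, ({a j.castSucc, a j.succ} : Set ℝ) := by
        rintro x ⟨hxC, hxn⟩
        simp only [Set.mem_iUnion, exists_prop] at hxC hxn ⊢
        obtain ⟨j, hj, hxj⟩ := hxC
        push_neg at hxn
        refine ⟨j, hj, ?_⟩
        have hmem : x ∈ Set.Icc (a j.castSucc) (a j.succ) \ I j := ⟨hxj, hxn j hj⟩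
        rwa [show Set.Icc (a j.castSucc) (a j.succ) \ I j = {a j.castSucc, a j.succ} from
          Set.Icc_diff_Ioo_same (hmono (Fin.castSucc_lt_succ (i := j))).le] at hmem
      refine measure_mono_null hsub ?_
      exact (Set.Finite.biUnion (F k).finite_toSet
        (fun j _ => (Set.finite_singleton _).insert _)).measure_zero volume
    rw [MeasureTheory.ae_eq_set]
    exact ⟨measure_mono_null (Set.diff_subset_diff_left hsub1) hnull2,
      measure_mono_null (Set.diff_subset_diff_left hsub2) hnull1⟩
  have hcover : ∀ k, ∑ j ∈ F k, w j = |slope k| * w k := by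
    intro k
    have habs : (0:ℝ) < |slope k| := abs_pos.2 (hs0 k)
    have h1 : volume (⋃ j ∈ F k, I j) = ∑ j ∈ F k, volume (I j) :=
      measure_biUnion_finset (fun i _ j hj hij => hIdisj i j hij) (fun j _ => hImeas j)
    have h2 : volume (⋃ j ∈ F k, I j) = ENNReal.ofReal (|slope k| * w k) := by
      rw [← measure_congr (hae k), hUvol k]
    rw [h1] at h2
    have h3 : ∑ j ∈ F k, volume (I j) = ENNReal.ofReal (∑ j ∈ F k, w j) := by
      rw [ENNReal.ofReal_sum_of_nonneg (fun j _ => (hw j).le)]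
      exact Finset.sum_congr rfl fun j _ => hIvol j
    rw [h3] at h2
    exact (ENNReal.ofReal_eq_ofReal_iff (Finset.sum_nonneg fun j _ => (hw j).le)
      (mul_nonneg habs.le (hw k).le)).1 h2
  set m : Fin K → Fin K → ℝ := fun j k => if j ∈ F k then |slope k|⁻¹ else 0 with hmdef
  have hm : ∀ j k, 0 ≤ m j k := by
    intro j k
    rw [hmdef]; dsimp only
    split
    · positivity
    · exact le_refl 0
  have hmass : ∀ k, ∑ j, w j * m j k = w k := by
    intro k
    have habs : (0:ℝ) < |slope k| := abs_pos.2 (hs0 k)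
    have e : ∀ j, w j * m j k = if j ∈ F k then w j * |slope k|⁻¹ else 0 := by
      intro j; rw [hmdef]; dsimp only; split <;> simp
    rw [Finset.sum_congr rfl fun j _ => e j, Finset.sum_ite_mem, Finset.univ_inter,
      ← Finset.sum_mul, hcover k]
    field_simp
  obtain ⟨c, hc0, hc1, hcfix⟩ := exists_cesaro_fixed m w hm hw hmass
  have htot : ∑ j, w j = 1 := by
    set g : ℕ → ℝ := fun i => if h : i < K + 1 then a ⟨i, h⟩ else 0 with hgdef
    have hg : ∀ j : Fin K, w j = g ((j : ℕ) + 1) - g (j : ℕ) := by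
      intro j
      have h1 : ((j:ℕ)+1) < K + 1 := Nat.succ_lt_succ j.isLt
      have h2 : (j:ℕ) < K + 1 := Nat.lt_succ_of_lt j.isLt
      rw [hgdef]; dsimp only
      rw [dif_pos h1, dif_pos h2, hwdef]
      congr 1
    rw [Finset.sum_congr rfl fun j _ => hg j,
      Fin.sum_univ_eq_sum_range (fun i => g (i+1) - g i) K,
      Finset.sum_range_sub g K]
    rw [hgdef]; dsimp only
    rw [dif_pos (Nat.lt_succ_self K), dif_pos (Nat.succ_pos K)]
    have e1 : (⟨K, Nat.lt_succ_self K⟩ : Fin (K+1)) = Fin.last K := rfl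
    have e2 : (⟨0, Nat.succ_pos K⟩ : Fin (K+1)) = 0 := rfl
    rw [e1, e2, ha0, ha1]; ring
  set μ : Measure ℝ := ∑ j : Fin K, ENNReal.ofReal (c j) • volume.restrict (I j) with hμdef
  refine ⟨μ, ?_, ?_, ?_⟩
  · constructor
    rw [hμdef, Measure.finset_sum_apply]
    have e : ∀ j : Fin K, (ENNReal.ofReal (c j) • volume.restrict (I j)) Set.univ
        = ENNReal.ofReal (w j * c j) := by
      intro j
      rw [Measure.smul_apply, smul_eq_mul, Measure.restrict_apply_univ, hIvol j,
        ← ENNReal.ofReal_mul (hc0 j), mul_comm (c j) (w j)]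
    rw [Finset.sum_congr rfl fun j _ => e j,
      ← ENNReal.ofReal_sum_of_nonneg (fun j _ => mul_nonneg (hw j).le (hc0 j)), hc1, htot,
      ENNReal.ofReal_one]
  · intro s hs
    rw [hμdef, Measure.finset_sum_apply]
    refine Finset.sum_eq_zero fun j _ => ?_
    rw [Measure.smul_apply, smul_eq_mul]
    have hr : volume.restrict (I j) s = 0 :=
      le_antisymm ((Measure.le_iff'.1 Measure.restrict_le_self s).trans hs.le) (zero_le)
    rw [hr, mul_zero]
  · rw [hμdef, measure_map_finset_sum hTmeas]
    have step : ∀ j, Measure.map T (ENNReal.ofReal (c j) • volume.restrict (I j))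
        = ∑ i : Fin K, (if i ∈ F j then ENNReal.ofReal (c j * |slope j|⁻¹) else 0)
            • volume.restrict (I i) := by
      intro j
      rw [Measure.map_smul, hbranch j, Measure.restrict_congr_set (hae j),
        restrict_finset_biUnion_disjoint volume (F j) I hImeas
          (fun i _ i' _ h => hIdisj i i' h),
        smul_smul, ← ENNReal.ofReal_mul (hc0 j), Finset.smul_sum]
      have e : ∀ i : Fin K, (if i ∈ F j then ENNReal.ofReal (c j * |slope j|⁻¹) else 0)
          • volume.restrict (I i)
          = if i ∈ F j then ENNReal.ofReal (c j * |slope j|⁻¹) • volume.restrict (I i)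
            else 0 := by
        intro i; split <;> simp
      rw [Finset.sum_congr rfl fun i _ => e i, Finset.sum_ite_mem, Finset.univ_inter]
    calc ∑ j : Fin K, Measure.map T (ENNReal.ofReal (c j) • volume.restrict (I j))
        = ∑ j : Fin K, ∑ i : Fin K,
            (if i ∈ F j then ENNReal.ofReal (c j * |slope j|⁻¹) else 0)
              • volume.restrict (I i) := Finset.sum_congr rfl fun j _ => step j
      _ = ∑ i : Fin K, (∑ j : Fin K,
            if i ∈ F j then ENNReal.ofReal (c j * |slope j|⁻¹) else 0)
              • volume.restrict (I i) := by
          rw [Finset.sum_comm]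
          exact Finset.sum_congr rfl fun i _ => (Finset.sum_smul).symm
      _ = ∑ i : Fin K, ENNReal.ofReal (c i) • volume.restrict (I i) := by
          refine Finset.sum_congr rfl fun i _ => ?_
          congr 1
          have e : ∀ j : Fin K, (if i ∈ F j then ENNReal.ofReal (c j * |slope j|⁻¹) else 0)
              = ENNReal.ofReal (m i j * c j) := by
            intro j
            rw [hmdef]; dsimp only
            split
            · rw [mul_comm]
            · simp
          rw [Finset.sum_congr rfl fun j _ => e j,
            ← ENNReal.ofReal_sum_of_nonneg (fun j _ => mul_nonneg (hm i j) (hc0 j)), hcfix i]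
      _ = μ := hμdef.symm
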